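/- On the reference tetrahedron K³, for each face f_{j1} = [j2,j3,j4] and each fixed superscript i ∈ {1,2}, the face-based interior functions Φ^{t,f_{j1}^1}_{m,n} = ι (1−λ_{j2})^m (1−λ_{j2}−λ_{j3})^n P_m^{(2n+3,2)}(2λ_{j3}/(1−λ_{j2}) − 1) P_n^{(0,2)}(2λ_{j4}/(1−λ_{j2}−λ_{j3}) − 1) τ^{[j2,j3]}/|τ^{[j2,j3]}| and Φ^{t,f_{j1}^2}_{m,n} defined likewise with τ^{[j2,j4]}/|τ^{[j2,j4]}|, where ι = C_m^n λ_{j2} λ_{j3} λ_{j4}, are orthonormal on K³: for all integers m1, n1, m2, n2 ≥ 0, ⟨Φ^{t,f_{j1}^i}_{m1,n1}, Φ^{t,f_{j1}^i}_{m2,n2}⟩_{K³} = δ_{m1 m2} δ_{n1 n2}. -/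

import Mathlib

open MeasureTheory
open scoped BigOperators

noncomputable section

/-- Vertices of the reference tetrahedron:
`v0 = (0,0,0)`, `v1 = (1,0,0)`, `v2 = (0,1,0)`, `v3 = (0,0,1)`. -/
def vtx : Fin 4 → Fin 3 → ℝ := ![![0,0,0], ![1,0,0], ![0,1,0], ![0,0,1]]

/-- Barycentric coordinates `λ0 = 1−ξ−η−ζ`, `λ1 = ξ`, `λ2 = η`, `λ3 = ζ`. -/
def lam : Fin 4 → (Fin 3 → ℝ) → ℝ :=
  ![fun p => 1 - p 0 - p 1 - p 2, fun p => p 0, fun p => p 1, fun p => p 2]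

/-- The (constant) gradients `∇λ_i`. -/
def gradLam : Fin 4 → Fin 3 → ℝ := ![![-1,-1,-1], ![1,0,0], ![0,1,0], ![0,0,1]]

/-- The reference tetrahedron `K³ = {(ξ,η,ζ) : ξ,η,ζ ≥ 0, ξ+η+ζ ≤ 1}`. -/
def K3 : Set (Fin 3 → ℝ) := {p | 0 ≤ p 0 ∧ 0 ≤ p 1 ∧ 0 ≤ p 2 ∧ p 0 + p 1 + p 2 ≤ 1}

/-- Cross product in ℝ³. -/
def cross3 (u v : Fin 3 → ℝ) : Fin 3 → ℝ :=
  ![u 1 * v 2 - u 2 * v 1, u 2 * v 0 - u 0 * v 2, u 0 * v 1 - u 1 * v 0]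

/-- Euclidean norm in ℝ³. -/
def norm3 (u : Fin 3 → ℝ) : ℝ := Real.sqrt (∑ i, u i ^ 2)

/-- Euclidean dot product in ℝ³. -/
def dot3 (u v : Fin 3 → ℝ) : ℝ := ∑ i, u i * v i

/-- The unit vector in the direction of `u`. -/
def unitV (u : Fin 3 → ℝ) : Fin 3 → ℝ := (norm3 u)⁻¹ • u

/-- The outward unit normal of the face `f_j` of `K³` opposite the vertex
`v_j` (that face lies in the plane `λ_j = 0`): `n^{f_j} = −∇λ_j / |∇λ_j|`. -/
def nFace (j : Fin 4) : Fin 3 → ℝ := (norm3 (gradLam j))⁻¹ • (-(gradLam j))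

/-- The classical (un-normalized) Jacobi polynomial `P_n^{(a,b)}` in homogenized
(cleared-denominator) form: `jacobiHom n a b u w = w^n P_n^{(a,b)}(u/w)` for
`w ≠ 0`, via the explicit sum
`P_n^{(a,b)}(x) = ∑_{s} C(n+a, n−s) C(n+b, s) ((x−1)/2)^s ((x+1)/2)^{n−s}`. -/
def jacobiHom (n a b : ℕ) (u w : ℝ) : ℝ :=
  ∑ k ∈ Finset.range (n+1),
    (((n+a).choose (n-k) : ℝ)) * (((n+b).choose k : ℝ)) *
      ((u - w)/2)^k * ((u + w)/2)^(n-k)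

/-- The degree-`n` Legendre polynomial `ℓ_n` (normalized so `ℓ_n(1) = 1`). -/
def legendre (n : ℕ) (x : ℝ) : ℝ := jacobiHom n 0 0 x 1

/-- Normalization constant
`C_m^n = √((2n+3)(m+n+3)(m+2n+4)(m+2n+5)(2m+2n+7)(2m+2n+8)(2m+2n+9)) / √((m+1)(m+2))`. -/
def Cmn (m n : ℕ) : ℝ :=
  Real.sqrt
    (((2*n+3)*(m+n+3)*(m+2*n+4)*(m+2*n+5)*(2*m+2*n+7)*(2*m+2*n+8)*(2*m+2*n+9) : ℕ) : ℝ) /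
  Real.sqrt (((m+1)*(m+2) : ℕ) : ℝ)

/-- Face-based interior function `Φ^{t,f_{j1}^i}_{m,n}` (`i ∈ {1,2}`):
`ι (1−λ_{j2})^m (1−λ_{j2}−λ_{j3})^n P_m^{(2n+3,2)}(2λ_{j3}/(1−λ_{j2}) − 1)
P_n^{(0,2)}(2λ_{j4}/(1−λ_{j2}−λ_{j3}) − 1)` times the unit tangent
`τ^{[j2,j3]}/|τ^{[j2,j3]}|` (for `i = 1`, here `i = 0 : Fin 2`) or
`τ^{[j2,j4]}/|τ^{[j2,j4]}|` (for `i = 2`), where `ι = C_m^n λ_{j2} λ_{j3} λ_{j4}`. -/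
def faceInt (j2 j3 j4 : Fin 4) (i : Fin 2) (m n : ℕ) (p : Fin 3 → ℝ) : Fin 3 → ℝ :=
  (Cmn m n * lam j2 p * lam j3 p * lam j4 p *
    jacobiHom m (2*n+3) 2 (2 * lam j3 p - (1 - lam j2 p)) (1 - lam j2 p) *
    jacobiHom n 0 2 (2 * lam j4 p - (1 - lam j2 p - lam j3 p))
      (1 - lam j2 p - lam j3 p)) •
  (if i = 0 then unitV (vtx j3 - vtx j2) else unitV (vtx j4 - vtx j2))


open Finset intervalIntegral

open Finset

lemma sum_pascal (m : ℕ) (F : ℕ → ℝ) :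
    ∑ s ∈ range (m+2), (-1:ℝ)^s * ((m+1).choose s) * F s
    = ∑ s ∈ range (m+1), (-1:ℝ)^s * (m.choose s) * (F s - F (s+1)) := by
  have h1 : ∀ s : ℕ, (((m+1).choose (s+1) : ℝ)) = m.choose s + m.choose (s+1) := by
    intro s; exact_mod_cast Nat.choose_succ_succ m s
  rw [Finset.sum_range_succ' (fun s => (-1:ℝ)^s * ((m+1).choose s) * F s) (m+1)]
  have e1 : ∑ s ∈ range (m+1), (-1:ℝ)^(s+1) * ((m+1).choose (s+1)) * F (s+1)
      = (∑ s ∈ range (m+1), (-1:ℝ)^(s+1) * (m.choose (s+1)) * F (s+1))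
        - ∑ s ∈ range (m+1), (-1:ℝ)^s * (m.choose s) * F (s+1) := by
    rw [← Finset.sum_sub_distrib]
    exact Finset.sum_congr rfl (fun s _ => by rw [h1 s]; ring)
  have e2 : (∑ s ∈ range (m+1), (-1:ℝ)^(s+1) * (m.choose (s+1)) * F (s+1))
      = (∑ s ∈ range (m+1), (-1:ℝ)^s * (m.choose s) * F s) - (-1:ℝ)^0 * ((m+1).choose 0) * F 0 := by
    have h3 := Finset.sum_range_succ' (fun s => (-1:ℝ)^s * (m.choose s) * F s) (m+1)
    rw [Finset.sum_range_succ (fun s => (-1:ℝ)^s * (m.choose s) * F s) (m+1)] at h3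
    have hz : ((-1:ℝ)^(m+1) * (m.choose (m+1)) * F (m+1)) = 0 := by
      simp [Nat.choose_eq_zero_of_lt (Nat.lt_succ_self m)]
    simp only [hz, Nat.choose_zero_right, Nat.cast_one, pow_zero, one_mul] at h3 ⊢
    linarith
  have e3 : ∑ s ∈ range (m+1), (-1:ℝ)^s * (m.choose s) * (F s - F (s+1))
      = (∑ s ∈ range (m+1), (-1:ℝ)^s * (m.choose s) * F s)
        - ∑ s ∈ range (m+1), (-1:ℝ)^s * (m.choose s) * F (s+1) := by
    rw [← Finset.sum_sub_distrib]
    exact Finset.sum_congr rfl (fun s _ => by ring)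
  rw [e1, e2, e3]; simp; ring

lemma altgen : ∀ m i j a c : ℕ, i + j ≤ m → m ≤ c →
    ∑ s ∈ range (m+1), (-1:ℝ)^s * (m.choose s) * ((a+j+s).choose j) * ((c-s).choose i)
    = if i + j = m then (-1:ℝ)^j * (m.choose i) else 0 := by
  intro m
  induction m with
  | zero =>
    intro i j a c hij hmc
    obtain ⟨hi, hj⟩ : i = 0 ∧ j = 0 := by omega
    subst hi; subst hj; simp
  | succ m IH =>
    intro i j a c hij hmc
    have hgoal : ∑ s ∈ range (m+2), (-1:ℝ)^s * ((m+1).choose s) * ((a+j+s).choose j) * ((c-s).choose i)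
        = ∑ s ∈ range (m+2), (-1:ℝ)^s * ((m+1).choose s) * (((a+j+s).choose j) * ((c-s).choose i)) :=
      Finset.sum_congr rfl (fun s _ => by ring)
    have key := sum_pascal m (fun s => (((a+j+s).choose j : ℝ)) * ((c-s).choose i))
    rw [hgoal, key]
    have hg : ∀ s : ℕ, ∀ i' : ℕ, ((c-s).choose (i'+1) : ℝ) - ((c-(s+1)).choose (i'+1)) = ((c-1-s).choose i') ∨ m < s := by
      intro s i'
      by_cases hs : s ≤ m
      · left
        have h1 : c - s = (c-1-s) + 1 := by omega
        have h2 : c - (s+1) = c-1-s := by omega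
        rw [h1, h2]
        have h3 := Nat.choose_succ_succ (c-1-s) i'
        push_cast [h3]; ring
      · right; omega
    have hf : ∀ s : ℕ, ∀ j' : ℕ, ((a+(j'+1)+s).choose (j'+1) : ℝ) - ((a+(j'+1)+(s+1)).choose (j'+1)) = -(((a+1)+j'+s).choose j') := by
      intro s j'
      have h1 : a+(j'+1)+(s+1) = (a+1+j'+s) + 1 := by omega
      have h2 : a+1+j'+s+1 = (a+1+j'+s)+1 := by ring
      have h3 := Nat.choose_succ_succ (a+1+j'+s) j'
      rw [h1]
      have h4 : a+(j'+1)+s = (a+1)+j'+s := by ring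
      rw [h4]
      push_cast [h3]; ring
    match i, j with
    | 0, 0 =>
      rw [if_neg (by omega)]
      apply Finset.sum_eq_zero
      intro s _; simp
    | 0, j'+1 =>
      have e : ∑ s ∈ range (m+1), (-1:ℝ)^s * (m.choose s) *
          ((((a+(j'+1)+s).choose (j'+1) : ℝ)) * ((c-s).choose 0) - ((a+(j'+1)+(s+1)).choose (j'+1)) * ((c-(s+1)).choose 0))
          = ∑ s ∈ range (m+1), -((-1:ℝ)^s * (m.choose s) * (((a+1)+j'+s).choose j') * (((c-1)-s).choose 0)) := by
        apply Finset.sum_congr rfl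
        intro s _
        simp only [Nat.choose_zero_right, Nat.cast_one, mul_one]
        rw [show (((a+(j'+1)+s).choose (j'+1):ℝ)) - ((a+(j'+1)+(s+1)).choose (j'+1)) = -(((a+1)+j'+s).choose j') from hf s j'] at *
        · nlinarith [hf s j']
      rw [e, Finset.sum_neg_distrib, IH 0 j' (a+1) (c-1) (by omega) (by omega)]
      by_cases h : j' = m
      · subst h
        rw [if_pos (by omega), if_pos (by omega)]
        simp [pow_succ]
      · rw [if_neg (by omega), if_neg (by omega)]; simp
    | i'+1, 0 =>
      have e : ∑ s ∈ range (m+1), (-1:ℝ)^s * (m.choose s) *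
          ((((a+0+s).choose 0 : ℝ)) * ((c-s).choose (i'+1)) - ((a+0+(s+1)).choose 0) * ((c-(s+1)).choose (i'+1)))
          = ∑ s ∈ range (m+1), (-1:ℝ)^s * (m.choose s) * (((a+0+s).choose 0 : ℝ)) * (((c-1)-s).choose i') := by
        apply Finset.sum_congr rfl
        intro s hs
        have hsm : s ≤ m := by have := Finset.mem_range.mp hs; omega
        rcases hg s i' with h | h
        · simp only [Nat.choose_zero_right, Nat.cast_one, one_mul, mul_one]
          rw [show (((c-s).choose (i'+1):ℝ)) - ((c-(s+1)).choose (i'+1)) = ((c-1-s).choose i') from h]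
        · omega
      rw [e, IH i' 0 a (c-1) (by omega) (by omega)]
      by_cases h : i' = m
      · subst h
        rw [if_pos (by omega), if_pos (by omega)]
        simp
      · rw [if_neg (by omega), if_neg (by omega)]
    | i'+1, j'+1 =>
      have e : ∑ s ∈ range (m+1), (-1:ℝ)^s * (m.choose s) *
          ((((a+(j'+1)+s).choose (j'+1) : ℝ)) * ((c-s).choose (i'+1)) - ((a+(j'+1)+(s+1)).choose (j'+1)) * ((c-(s+1)).choose (i'+1)))
          = ∑ s ∈ range (m+1), ((-1:ℝ)^s * (m.choose s) * (((a+(j'+1)+s).choose (j'+1) : ℝ)) * (((c-1)-s).choose i')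
             - (-1:ℝ)^s * (m.choose s) * ((((a+1)+j'+s).choose j' : ℝ)) * (((c-1)-s).choose (i'+1))) := by
        apply Finset.sum_congr rfl
        intro s hs
        have hsm : s ≤ m := by have := Finset.mem_range.mp hs; omega
        rcases hg s i' with h | h
        · have h2 := hf s j'
          -- F s - F(s+1) = f s * (g s - g (s+1)) + g (s+1) * (f s - f (s+1))
          -- with g (s+1) = C(c-(s+1), i'+1) = C(c-1-s, i'+1)
          have h3 : ((c-(s+1)).choose (i'+1) : ℝ) = ((c-1-s).choose (i'+1)) := by
            congr 2; omega
          rw [h3] at h ⊢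
          linear_combination ((-1:ℝ)^s * (m.choose s) * (((c-1-s).choose (i'+1) : ℝ))) * h2
            + ((-1:ℝ)^s * (m.choose s) * (((a+(j'+1)+s).choose (j'+1) : ℝ))) * h
        · omega
      rw [e, Finset.sum_sub_distrib]
      rw [IH i' (j'+1) a (c-1) (by omega) (by omega), IH (i'+1) j' (a+1) (c-1) (by omega) (by omega)]
      by_cases h : i' + j' + 1 = m
      · rw [if_pos (by omega), if_pos (by omega), if_pos (by omega)]
        have hch : ((m+1).choose (i'+1) : ℝ) = (m.choose i') + (m.choose (i'+1)) := by
          exact_mod_cast Nat.choose_succ_succ m i'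
        rw [hch]
        ring
      · rw [if_neg (by omega), if_neg (by omega), if_neg (by omega)]; ring


open Finset intervalIntegral

/-- Jacobi polynomial `P_m^{(a,b)}(2t-1)` in expanded form. -/
def jp (a b m : ℕ) (t : ℝ) : ℝ :=
  ∑ k ∈ range (m+1), ((m+a).choose (m-k) : ℝ) * ((m+b).choose k) * (t-1)^k * t^(m-k)

lemma continuous_jp (a b m : ℕ) : Continuous (jp a b m) := by
  apply continuous_finset_sum
  intro k _
  fun_prop

lemma Ibeta : ∀ (j i : ℕ), ∫ t in (0:ℝ)..1, t^i * (1-t)^j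
    = (i.factorial : ℝ) * j.factorial / (i+j+1).factorial := by
  intro j
  induction j with
  | zero =>
    intro i
    simp only [pow_zero, mul_one, integral_pow, Nat.factorial_zero, Nat.cast_one]
    rw [Nat.factorial_succ]
    have : (i.factorial : ℝ) ≠ 0 := Nat.cast_ne_zero.mpr (Nat.factorial_ne_zero _)
    push_cast
    field_simp
    simp
  | succ j IH =>
    intro i
    have split : ∀ t : ℝ, t^i * (1-t)^(j+1) = t^i*(1-t)^j - t^(i+1)*(1-t)^j := by
      intro t; ring
    rw [intervalIntegral.integral_congr (g := fun t => t^i*(1-t)^j - t^(i+1)*(1-t)^j)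
      (fun t _ => split t)]
    rw [intervalIntegral.integral_sub
      (Continuous.intervalIntegrable (by fun_prop) _ _)
      (Continuous.intervalIntegrable (by fun_prop) _ _)]
    rw [IH i, IH (i+1)]
    have e1 : i + (j+1) + 1 = i + 1 + j + 1 := by omega
    rw [e1]
    have e2 : i + 1 + j + 1 = (i + j + 1) + 1 := by omega
    rw [e2, Nat.factorial_succ (i+j+1), Nat.factorial_succ i, Nat.factorial_succ j]
    have h1 : ((i+j+1).factorial : ℝ) ≠ 0 := Nat.cast_ne_zero.mpr (Nat.factorial_ne_zero _)
    have h2 : ((i:ℝ) + (j:ℝ) + 1) + 1 ≠ 0 := by positivity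
    push_cast
    field_simp
    ring

lemma core2 (m s i j a b : ℕ) (hs : s ≤ m) :
    ((m+a).choose (m-s) : ℝ) * ((m+b).choose s) * (a+j+s).factorial * ((m+b+i)-s).factorial * m.factorial
    = (m+a).factorial * (m+b).factorial * i.factorial * j.factorial *
      ((a+j+s).choose j) * (((m+b+i)-s).choose i) * (m.choose s) := by
  have c1 : ((m+a).choose (m-s) : ℝ) = (m+a).factorial / ((m-s).factorial * (a+s).factorial) := by
    rw [Nat.cast_choose ℝ (by omega : m - s ≤ m + a), show (m+a)-(m-s) = a+s from by omega]
  have c2 : ((m+b).choose s : ℝ) = (m+b).factorial / (s.factorial * ((m+b)-s).factorial) :=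
    Nat.cast_choose ℝ (by omega)
  have c3 : ((a+j+s).choose j : ℝ) = (a+j+s).factorial / (j.factorial * (a+s).factorial) := by
    rw [Nat.cast_choose ℝ (by omega : j ≤ a+j+s), show (a+j+s)-j = a+s from by omega]
  have c4 : (((m+b+i)-s).choose i : ℝ) = ((m+b+i)-s).factorial / (i.factorial * ((m+b)-s).factorial) := by
    rw [Nat.cast_choose ℝ (by omega : i ≤ (m+b+i)-s), show ((m+b+i)-s)-i = (m+b)-s from by omega]
  have c5 : (m.choose s : ℝ) = m.factorial / (s.factorial * (m-s).factorial) :=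
    Nat.cast_choose ℝ hs
  rw [c1, c2, c3, c4, c5]
  have n1 : ((m-s).factorial : ℝ) ≠ 0 := Nat.cast_ne_zero.mpr (Nat.factorial_ne_zero _)
  have n2 : ((a+s).factorial : ℝ) ≠ 0 := Nat.cast_ne_zero.mpr (Nat.factorial_ne_zero _)
  have n3 : (s.factorial : ℝ) ≠ 0 := Nat.cast_ne_zero.mpr (Nat.factorial_ne_zero _)
  have n4 : (((m+b)-s).factorial : ℝ) ≠ 0 := Nat.cast_ne_zero.mpr (Nat.factorial_ne_zero _)
  have n5 : (i.factorial : ℝ) ≠ 0 := Nat.cast_ne_zero.mpr (Nat.factorial_ne_zero _)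
  have n6 : (j.factorial : ℝ) ≠ 0 := Nat.cast_ne_zero.mpr (Nat.factorial_ne_zero _)
  field_simp

lemma Imom2 (a b m i j : ℕ) (hij : i + j ≤ m) :
    ∫ t in (0:ℝ)..1, t^(b+i) * (1-t)^(a+j) * jp a b m t
    = if i + j = m then (-1:ℝ)^j * (m+a).factorial * (m+b).factorial / (a+b+2*m+1).factorial
      else 0 := by
  have hcongr : ∀ t : ℝ, t^(b+i) * (1-t)^(a+j) * jp a b m t
      = ∑ k ∈ range (m+1), ((m+a).choose (m-k) : ℝ) * ((m+b).choose k) *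
          ((-1)^k * (t^((b+i)+(m-k)) * (1-t)^((a+j)+k))) := by
    intro t
    rw [jp, Finset.mul_sum]
    apply Finset.sum_congr rfl
    intro k _
    have h : (t-1)^k = (-1:ℝ)^k * (1-t)^k := by
      rw [show t - 1 = -(1-t) from by ring, neg_pow]
    rw [h, pow_add, pow_add]
    ring
  rw [intervalIntegral.integral_congr (fun t _ => hcongr t)]
  rw [intervalIntegral.integral_finset_sum (fun k _ => by
    apply Continuous.intervalIntegrable; fun_prop)]
  have hterm : ∀ k ∈ range (m+1),
      (∫ t in (0:ℝ)..1, ((m+a).choose (m-k) : ℝ) * ((m+b).choose k) *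
          ((-1)^k * (t^((b+i)+(m-k)) * (1-t)^((a+j)+k))))
      = (((m+a).factorial : ℝ) * (m+b).factorial * i.factorial * j.factorial /
          (m.factorial * (a+b+i+j+m+1).factorial)) *
        ((-1:ℝ)^k * (m.choose k) * ((a+j+k).choose j) * (((m+b+i)-k).choose i)) := by
    intro k hk
    have hkm : k ≤ m := by have := Finset.mem_range.mp hk; omega
    rw [intervalIntegral.integral_const_mul, intervalIntegral.integral_const_mul,
      Ibeta ((a+j)+k) ((b+i)+(m-k))]
    rw [show (b+i)+(m-k) = (m+b+i)-k from by omega]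
    rw [show ((m+b+i)-k) + ((a+j)+k) + 1 = a+b+i+j+m+1 from by omega]
    have hc := core2 m k i j a b hkm
    have d2 : (m.factorial : ℝ) ≠ 0 := Nat.cast_ne_zero.mpr (Nat.factorial_ne_zero _)
    have hc' : ((m+a).choose (m-k) : ℝ) * ((m+b).choose k) * (a+j+k).factorial * ((m+b+i)-k).factorial
        = ((m+a).factorial : ℝ) * (m+b).factorial * i.factorial * j.factorial *
          ((a+j+k).choose j) * (((m+b+i)-k).choose i) * (m.choose k) / m.factorial := by
      rw [eq_div_iff d2]; linear_combination hc
    linear_combination ((-1:ℝ)^k / (((a+b+i+j+m+1).factorial : ℝ))) * hc'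
  rw [Finset.sum_congr rfl hterm, ← Finset.mul_sum]
  have halt := altgen m i j a (m+b+i) hij (by omega)
  rw [halt]
  by_cases h : i + j = m
  · rw [if_pos h, if_pos h]
    have hi : i ≤ m := by omega
    have hfact : (m.choose i : ℝ) * i.factorial * j.factorial = m.factorial := by
      have := Nat.choose_mul_factorial_mul_factorial hi
      rw [show m - i = j from by omega] at this
      exact_mod_cast this
    rw [show a+b+i+j+m+1 = a+b+2*m+1 from by omega]
    have d1 : ((a+b+2*m+1).factorial : ℝ) ≠ 0 := Nat.cast_ne_zero.mpr (Nat.factorial_ne_zero _)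
    have d2 : (m.factorial : ℝ) ≠ 0 := Nat.cast_ne_zero.mpr (Nat.factorial_ne_zero _)
    have hfact' : (m.choose i : ℝ) * i.factorial * j.factorial / m.factorial = 1 := by
      rw [div_eq_one_iff_eq d2]; exact hfact
    linear_combination ((-1:ℝ)^j * ((m+a).factorial : ℝ) * ((m+b).factorial : ℝ) / (((a+b+2*m+1).factorial : ℝ))) * hfact'
  · rw [if_neg h, if_neg h, mul_zero]

lemma vdm (m a b : ℕ) :
    ∑ k ∈ range (m+1), ((m+a).choose (m-k) : ℝ) * ((m+b).choose k)
    = ((2*m+a+b).choose m : ℝ) := by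
  have h := Nat.add_choose_eq (m+a) (m+b) m
  rw [show (m+a)+(m+b) = 2*m+a+b from by omega] at h
  rw [Finset.Nat.sum_antidiagonal_eq_sum_range_succ_mk] at h
  have hr := Finset.sum_range_reflect (fun k => ((m+a).choose (m-k) : ℝ) * ((m+b).choose k)) (m+1)
  simp only [Nat.add_sub_cancel] at hr
  rw [← hr]
  have : ∀ j ∈ range (m+1), ((m+a).choose (m - (m-j)) : ℝ) * ((m+b).choose (m-j))
      = ((m+a).choose j : ℝ) * ((m+b).choose (m-j)) := by
    intro j hj
    have : m - (m-j) = j := by have := Finset.mem_range.mp hj; omega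
    rw [this]
  rw [Finset.sum_congr rfl this]
  exact_mod_cast h.symm

lemma Jorth_le (a b m1 m2 : ℕ) (hle : m1 ≤ m2) :
    ∫ t in (0:ℝ)..1, t^b * (1-t)^a * jp a b m1 t * jp a b m2 t
    = if m1 = m2 then ((m1+a).factorial : ℝ) * (m1+b).factorial /
        (m1.factorial * ((m1+a+b).factorial) * ((a+b+2*m1+1 : ℕ) : ℝ)) else 0 := by
  have hcongr : ∀ t : ℝ, t^b * (1-t)^a * jp a b m1 t * jp a b m2 t
      = ∑ k ∈ range (m1+1), ((m1+a).choose (m1-k) : ℝ) * ((m1+b).choose k) *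
          ((-1)^k * (t^(b+(m1-k)) * (1-t)^(a+k) * jp a b m2 t)) := by
    intro t
    rw [show t^b * (1-t)^a * jp a b m1 t * jp a b m2 t
        = jp a b m1 t * (t^b * (1-t)^a * jp a b m2 t) from by ring]
    rw [jp, Finset.sum_mul]
    apply Finset.sum_congr rfl
    intro k _
    have h : (t-1)^k = (-1:ℝ)^k * (1-t)^k := by
      rw [show t - 1 = -(1-t) from by ring, neg_pow]
    rw [h, pow_add, pow_add]
    ring
  rw [intervalIntegral.integral_congr (fun t _ => hcongr t)]
  rw [intervalIntegral.integral_finset_sum (fun k _ => by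
    apply Continuous.intervalIntegrable
    have := continuous_jp a b m2
    fun_prop)]
  have hterm : ∀ k ∈ range (m1+1),
      (∫ t in (0:ℝ)..1, ((m1+a).choose (m1-k) : ℝ) * ((m1+b).choose k) *
          ((-1)^k * (t^(b+(m1-k)) * (1-t)^(a+k) * jp a b m2 t)))
      = ((m1+a).choose (m1-k) : ℝ) * ((m1+b).choose k) *
          ((-1)^k * (if (m1-k) + k = m2 then (-1:ℝ)^k * (m2+a).factorial * (m2+b).factorial / (a+b+2*m2+1).factorial else 0)) := by
    intro k hk
    rw [intervalIntegral.integral_const_mul, intervalIntegral.integral_const_mul]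
    congr 2
    exact Imom2 a b m2 (m1-k) k (by have := Finset.mem_range.mp hk; omega)
  rw [Finset.sum_congr rfl hterm]
  by_cases h : m1 = m2
  · subst h
    rw [if_pos rfl]
    have e : ∀ k ∈ range (m1+1),
        ((m1+a).choose (m1-k) : ℝ) * ((m1+b).choose k) *
          ((-1)^k * (if (m1-k) + k = m1 then (-1:ℝ)^k * (m1+a).factorial * (m1+b).factorial / (a+b+2*m1+1).factorial else 0))
        = (((m1+a).factorial : ℝ) * (m1+b).factorial / (a+b+2*m1+1).factorial) *
            (((m1+a).choose (m1-k) : ℝ) * ((m1+b).choose k)) := by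
      intro k hk
      have hkm : k ≤ m1 := by have := Finset.mem_range.mp hk; omega
      rw [if_pos (by omega)]
      have hsq : (-1:ℝ)^k * ((-1:ℝ)^k) = 1 := by
        rw [← pow_add, Even.neg_one_pow ⟨k, by ring⟩]
      linear_combination (((m1+a).choose (m1-k) : ℝ) * ((m1+b).choose k) * ((m1+a).factorial : ℝ) * ((m1+b).factorial : ℝ) / (((a+b+2*m1+1).factorial : ℝ))) * hsq
    rw [Finset.sum_congr rfl e, ← Finset.mul_sum, vdm m1 a b]
    have c1 : ((2*m1+a+b).choose m1 : ℝ) = (2*m1+a+b).factorial / (m1.factorial * ((m1+a+b)).factorial) := by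
      rw [Nat.cast_choose ℝ (by omega : m1 ≤ 2*m1+a+b), show (2*m1+a+b)-m1 = m1+a+b from by omega]
    rw [c1]
    rw [show a+b+2*m1+1 = (a+b+2*m1) + 1 from rfl, Nat.factorial_succ (a+b+2*m1)]
    have n1 : ((a+b+2*m1).factorial : ℝ) ≠ 0 := Nat.cast_ne_zero.mpr (Nat.factorial_ne_zero _)
    have n2 : (m1.factorial : ℝ) ≠ 0 := Nat.cast_ne_zero.mpr (Nat.factorial_ne_zero _)
    have n3 : ((m1+a+b).factorial : ℝ) ≠ 0 := Nat.cast_ne_zero.mpr (Nat.factorial_ne_zero _)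
    have n4 : ((a+b+2*m1+1 : ℕ) : ℝ) ≠ 0 := by positivity
    have e2 : ((2*m1+a+b).factorial : ℝ) = ((a+b+2*m1).factorial : ℝ) := by
      congr 2; omega
    rw [e2]
    push_cast
    field_simp
  · rw [if_neg h]
    apply Finset.sum_eq_zero
    intro k hk
    have hkm : k ≤ m1 := by have := Finset.mem_range.mp hk; omega
    rw [if_neg (by omega)]
    ring


open Finset intervalIntegral

lemma Jorth (a b m1 m2 : ℕ) :
    ∫ t in (0:ℝ)..1, t^b * (1-t)^a * jp a b m1 t * jp a b m2 t
    = if m1 = m2 then ((m1+a).factorial : ℝ) * (m1+b).factorial /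
        (m1.factorial * ((m1+a+b).factorial) * ((a+b+2*m1+1 : ℕ) : ℝ)) else 0 := by
  rcases le_or_gt m1 m2 with h | h
  · exact Jorth_le a b m1 m2 h
  · have hc : ∀ t : ℝ, t^b * (1-t)^a * jp a b m1 t * jp a b m2 t
        = t^b * (1-t)^a * jp a b m2 t * jp a b m1 t := fun t => by ring
    rw [intervalIntegral.integral_congr (fun t _ => hc t), Jorth_le a b m2 m1 h.le,
      if_neg (by omega), if_neg (by omega)]

lemma jacobiHom_scale (n a b : ℕ) (s t : ℝ) :
    jacobiHom n a b (2*(s*t) - s) s = s^n * jp a b n t := by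
  rw [jacobiHom, jp, Finset.mul_sum]
  apply Finset.sum_congr rfl
  intro k hk
  have hkn : k ≤ n := by have := Finset.mem_range.mp hk; omega
  rw [show (2*(s*t) - s - s)/2 = s*(t-1) from by ring,
      show (2*(s*t) - s + s)/2 = s*t from by ring, mul_pow, mul_pow]
  have hp : s^k * s^(n-k) = s^n := by rw [← pow_add]; congr 1; omega
  calc ((n+a).choose (n-k) : ℝ) * ((n+b).choose k) * (s^k * (t-1)^k) * (s^(n-k) * t^(n-k))
      = (s^k * s^(n-k)) * (((n+a).choose (n-k) : ℝ) * ((n+b).choose k) * (t-1)^k * t^(n-k)) := by ring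
    _ = s^n * (((n+a).choose (n-k) : ℝ) * ((n+b).choose k) * (t-1)^k * t^(n-k)) := by rw [hp]

lemma Iz (n1 n2 : ℕ) (s : ℝ) (hs : 0 ≤ s) :
    ∫ z in (0:ℝ)..s, z^2 * jacobiHom n1 0 2 (2*z - s) s * jacobiHom n2 0 2 (2*z - s) s
    = if n1 = n2 then s^(n1+n2+3) / (2*(n1:ℝ)+3) else 0 := by
  rcases eq_or_lt_of_le hs with h0 | h0
  · rw [← h0]
    simp only [intervalIntegral.integral_same]
    rw [show ((0:ℝ))^(n1+n2+3) = 0 from zero_pow (by omega), zero_div]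
    simp
  · have hs' : s ≠ 0 := ne_of_gt h0
    set F : ℝ → ℝ := fun z => z^2 * jacobiHom n1 0 2 (2*z - s) s * jacobiHom n2 0 2 (2*z - s) s with hF
    have hcm := intervalIntegral.integral_comp_mul_left (a := (0:ℝ)) (b := 1) F hs'
    rw [mul_zero, mul_one] at hcm
    have key : ∫ z in (0:ℝ)..s, F z = s * ∫ t in (0:ℝ)..1, F (s*t) := by
      rw [hcm, smul_eq_mul, ← mul_assoc, mul_inv_cancel₀ hs', one_mul]
    rw [key]
    have hFst : ∀ t : ℝ, F (s*t) = s^(n1+n2+2) * (t^2 * (1-t)^0 * jp 0 2 n1 t * jp 0 2 n2 t) := by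
      intro t
      rw [hF]
      simp only
      rw [jacobiHom_scale n1 0 2 s t, jacobiHom_scale n2 0 2 s t]
      have hp : s^2 * s^n1 * s^n2 = s^(n1+n2+2) := by
        rw [← pow_add, ← pow_add]; congr 1; omega
      rw [← hp]
      ring
    rw [intervalIntegral.integral_congr (fun t _ => hFst t), intervalIntegral.integral_const_mul,
      Jorth 0 2 n1 n2]
    by_cases h : n1 = n2
    · subst h
      rw [if_pos rfl, if_pos rfl]
      have e1 : n1 + 0 = n1 := by omega
      have e2 : n1 + 0 + 2 = n1 + 2 := by omega
      rw [e1, e2]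
      have n2' : ((n1+2).factorial : ℝ) ≠ 0 := Nat.cast_ne_zero.mpr (Nat.factorial_ne_zero _)
      have n3' : (n1.factorial : ℝ) ≠ 0 := Nat.cast_ne_zero.mpr (Nat.factorial_ne_zero _)
      have e3 : ((0+2+2*n1+1 : ℕ) : ℝ) = 2*(n1:ℝ)+3 := by push_cast; ring
      rw [e3]
      have h23 : (2*(n1:ℝ)+3) ≠ 0 := by positivity
      rw [show s^(n1+n1+3) = s * s^(n1+n1+2) from by ring]
      field_simp
    · rw [if_neg h, if_neg h]
      ring

def cst (m n : ℕ) : ℝ :=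
  ((m+2*n+3).factorial : ℝ) * ((m+2).factorial) /
    ((m.factorial : ℝ) * ((m+2*n+5).factorial) * ((2*m+2*n+6 : ℕ) : ℝ))

lemma Iy (m1 m2 n : ℕ) (r : ℝ) (hr : 0 ≤ r) :
    ∫ y in (0:ℝ)..r, y^2 * (r-y)^(2*n+3) * jacobiHom m1 (2*n+3) 2 (2*y - r) r
        * jacobiHom m2 (2*n+3) 2 (2*y - r) r
    = if m1 = m2 then r^(m1+m2+2*n+6) * cst m1 n else 0 := by
  rcases eq_or_lt_of_le hr with h0 | h0
  · rw [← h0]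
    simp only [intervalIntegral.integral_same]
    rw [show ((0:ℝ))^(m1+m2+2*n+6) = 0 from zero_pow (by omega), zero_mul]
    simp
  · have hr' : r ≠ 0 := ne_of_gt h0
    set F : ℝ → ℝ := fun y => y^2 * (r-y)^(2*n+3) * jacobiHom m1 (2*n+3) 2 (2*y - r) r
        * jacobiHom m2 (2*n+3) 2 (2*y - r) r with hF
    have hcm := intervalIntegral.integral_comp_mul_left (a := (0:ℝ)) (b := 1) F hr'
    rw [mul_zero, mul_one] at hcm
    have key : ∫ y in (0:ℝ)..r, F y = r * ∫ t in (0:ℝ)..1, F (r*t) := by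
      rw [hcm, smul_eq_mul, ← mul_assoc, mul_inv_cancel₀ hr', one_mul]
    rw [key]
    have hFst : ∀ t : ℝ, F (r*t) = r^(m1+m2+2*n+5) *
        (t^2 * (1-t)^(2*n+3) * jp (2*n+3) 2 m1 t * jp (2*n+3) 2 m2 t) := by
      intro t
      rw [hF]
      simp only
      rw [jacobiHom_scale m1 (2*n+3) 2 r t, jacobiHom_scale m2 (2*n+3) 2 r t]
      rw [show r - r*t = r * (1-t) from by ring, mul_pow, mul_pow]
      have hp : r^2 * r^(2*n+3) * r^m1 * r^m2 = r^(m1+m2+2*n+5) := by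
        rw [← pow_add, ← pow_add, ← pow_add]; congr 1; omega
      rw [← hp]
      ring
    rw [intervalIntegral.integral_congr (fun t _ => hFst t), intervalIntegral.integral_const_mul,
      Jorth (2*n+3) 2 m1 m2]
    by_cases h : m1 = m2
    · subst h
      rw [if_pos rfl, if_pos rfl, cst]
      have e1 : m1 + (2*n+3) = m1+2*n+3 := by omega
      have e2 : m1 + 2*n+3 + 2 = m1+2*n+5 := by omega
      have e3 : ((2*n+3) + 2 + 2*m1 + 1 : ℕ) = (2*m1+2*n+6 : ℕ) := by omega
      rw [e1, e2, e3]
      rw [show r^(m1+m1+2*n+6) = r * r^(m1+m1+2*n+5) from by ring]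
      ring
    · rw [if_neg h, if_neg h]
      ring

lemma continuous_jacobiHom_comp {X : Type*} [TopologicalSpace X] {f g : X → ℝ}
    (n a b : ℕ) (hf : Continuous f) (hg : Continuous g) :
    Continuous (fun x => jacobiHom n a b (f x) (g x)) := by
  apply continuous_finset_sum
  intro k _
  fun_prop


open MeasureTheory

def T3 : Set (ℝ × ℝ × ℝ) := {q | 0 ≤ q.1 ∧ 0 ≤ q.2.1 ∧ 0 ≤ q.2.2 ∧ q.1 + q.2.1 + q.2.2 ≤ 1}

def S2 (x : ℝ) : Set (ℝ × ℝ) := {yz | 0 ≤ yz.1 ∧ 0 ≤ yz.2 ∧ x + yz.1 + yz.2 ≤ 1}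

def e3 : (Fin 3 → ℝ) ≃ᵐ ℝ × (Fin 2 → ℝ) := MeasurableEquiv.piFinSuccAbove (fun _ : Fin 3 => ℝ) 0

def e2 : (ℝ × (Fin 2 → ℝ)) ≃ᵐ ℝ × (ℝ × ℝ) :=
  (MeasurableEquiv.refl ℝ).prodCongr (MeasurableEquiv.finTwoArrow)

def eFull : (Fin 3 → ℝ) ≃ᵐ ℝ × (ℝ × ℝ) := e3.trans e2

lemma eFull_apply (p : Fin 3 → ℝ) : eFull p = (p 0, p 1, p 2) := by
  rfl

lemma eFull_mp : MeasurePreserving eFull volume volume := by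
  have h1 : MeasurePreserving e3 volume volume :=
    volume_preserving_piFinSuccAbove (fun _ : Fin 3 => ℝ) 0
  have h2 : MeasurePreserving e2 volume volume := by
    have := (MeasurePreserving.id (volume : Measure ℝ)).prod
      (volume_preserving_finTwoArrow ℝ)
    exact this
  exact h2.comp h1

lemma eFull_image : eFull '' K3 = T3 := by
  ext q
  constructor
  · rintro ⟨p, hp, rfl⟩
    rw [eFull_apply]
    exact ⟨hp.1, hp.2.1, hp.2.2.1, hp.2.2.2⟩
  · intro hq
    refine ⟨![q.1, q.2.1, q.2.2], ?_, ?_⟩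
    · exact ⟨by simpa using hq.1, by simpa using hq.2.1, by simpa using hq.2.2.1, by
        simpa using hq.2.2.2⟩
    · rw [eFull_apply]
      simp

lemma isClosed_T3 : IsClosed T3 := by
  have : T3 = {q : ℝ × ℝ × ℝ | 0 ≤ q.1} ∩ ({q | 0 ≤ q.2.1} ∩ ({q | 0 ≤ q.2.2} ∩ {q | q.1 + q.2.1 + q.2.2 ≤ 1})) := by
    ext q; simp [T3, Set.mem_setOf_eq, and_assoc]
  rw [this]
  exact (isClosed_le continuous_const continuous_fst).inter
    ((isClosed_le continuous_const continuous_snd.fst).inter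
      ((isClosed_le continuous_const continuous_snd.snd).inter
        (isClosed_le (by fun_prop) continuous_const)))

lemma isCompact_T3 : IsCompact T3 := by
  apply IsCompact.of_isClosed_subset (isCompact_Icc (a := ((0:ℝ),(0:ℝ),(0:ℝ))) (b := ((1:ℝ),(1:ℝ),(1:ℝ)))) isClosed_T3
  rintro ⟨x, y, z⟩ ⟨h1, h2, h3, h4⟩
  simp only [Set.mem_Icc, Prod.le_def]
  constructor
  · exact ⟨h1, h2, h3⟩
  · exact ⟨by linarith, by linarith, by linarith⟩

lemma isClosed_S2 (x : ℝ) : IsClosed (S2 x) := by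
  have : S2 x = {yz : ℝ × ℝ | 0 ≤ yz.1} ∩ ({yz | 0 ≤ yz.2} ∩ {yz | x + yz.1 + yz.2 ≤ 1}) := by
    ext yz; simp [S2, Set.mem_setOf_eq, and_assoc]
  rw [this]
  exact (isClosed_le continuous_const continuous_fst).inter
    ((isClosed_le continuous_const continuous_snd).inter
      (isClosed_le (by fun_prop) continuous_const))

lemma isCompact_S2 (x : ℝ) (hx : 0 ≤ x) : IsCompact (S2 x) := by
  apply IsCompact.of_isClosed_subset (isCompact_Icc (a := ((0:ℝ),(0:ℝ))) (b := ((1:ℝ),(1:ℝ)))) (isClosed_S2 x)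
  rintro ⟨y, z⟩ ⟨h1, h2, h3⟩
  simp only [Set.mem_Icc, Prod.le_def]
  exact ⟨⟨h1, h2⟩, by linarith, by linarith⟩

lemma tet (W : ℝ → ℝ → ℝ → ℝ) (hW : Continuous fun q : ℝ × ℝ × ℝ => W q.1 q.2.1 q.2.2) :
    ∫ p in K3, W (p 0) (p 1) (p 2) =
    ∫ x in Set.Icc (0:ℝ) 1, ∫ y in Set.Icc (0:ℝ) (1-x), ∫ z in Set.Icc (0:ℝ) (1-x-y), W x y z := by
  set g : ℝ × ℝ × ℝ → ℝ := fun q => W q.1 q.2.1 q.2.2 with hg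
  -- step 1: move to ℝ × ℝ × ℝ
  have step1 : ∫ p in K3, W (p 0) (p 1) (p 2) = ∫ q in T3, g q := by
    rw [← eFull_image, eFull_mp.setIntegral_image_emb eFull.measurableEmbedding g K3]
    apply setIntegral_congr_fun
    · -- measurability of K3
      have : K3 = eFull ⁻¹' T3 := by
        rw [← eFull_image]; exact (Equiv.preimage_image eFull.toEquiv K3).symm
      rw [this]
      exact eFull.measurable (isClosed_T3.measurableSet)
    · intro p _
      simp only [eFull_apply]
      rfl
  rw [step1]
  have hT3m : MeasurableSet T3 := isClosed_T3.measurableSet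
  have hInt : IntegrableOn g T3 volume := hW.continuousOn.integrableOn_compact isCompact_T3
  -- step 2: indicator and first Fubini
  rw [← MeasureTheory.integral_indicator hT3m]
  have hIndInt : Integrable (T3.indicator g) (volume : Measure (ℝ × ℝ × ℝ)) :=
    (integrable_indicator_iff hT3m).mpr hInt
  rw [MeasureTheory.Measure.volume_eq_prod ℝ (ℝ×ℝ)] at hIndInt ⊢
  rw [MeasureTheory.integral_prod _ hIndInt]
  -- step 3: pointwise reduce inner double integral
  have inner_eq : ∀ x : ℝ,
      (∫ yz : ℝ × ℝ, T3.indicator g (x, yz))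
      = (Set.Ici (0:ℝ)).indicator
          (fun x' => ∫ y in Set.Icc (0:ℝ) (1-x'), ∫ z in Set.Icc (0:ℝ) (1-x'-y), W x' y z) x := by
    intro x
    by_cases hx : 0 ≤ x
    · rw [Set.indicator_of_mem (Set.mem_Ici.mpr hx)]
      have hfe : (fun yz : ℝ × ℝ => T3.indicator g (x, yz))
          = (S2 x).indicator (fun yz => W x yz.1 yz.2) := by
        funext yz
        by_cases hmem : yz ∈ S2 x
        · rw [Set.indicator_of_mem hmem]
          have : (x, yz) ∈ T3 := ⟨hx, hmem.1, hmem.2.1, hmem.2.2⟩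
          rw [Set.indicator_of_mem this]
        · rw [Set.indicator_of_notMem hmem, Set.indicator_of_notMem]
          intro hcon
          exact hmem ⟨hcon.2.1, hcon.2.2.1, hcon.2.2.2⟩
      rw [hfe]
      have hS2m : MeasurableSet (S2 x) := (isClosed_S2 x).measurableSet
      have hWx : Continuous (fun yz : ℝ × ℝ => W x yz.1 yz.2) := by
        have : Continuous (fun yz : ℝ × ℝ => (x, yz)) :=
          continuous_const.prodMk continuous_id
        exact hW.comp this
      have hIntS : Integrable ((S2 x).indicator (fun yz => W x yz.1 yz.2))
          ((volume : Measure ℝ).prod volume) := by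
        have h0 : IntegrableOn (fun yz : ℝ × ℝ => W x yz.1 yz.2) (S2 x) volume :=
          hWx.continuousOn.integrableOn_compact (isCompact_S2 x hx)
        have h1 := (integrable_indicator_iff hS2m).mpr h0
        exact (MeasureTheory.Measure.volume_eq_prod ℝ ℝ) ▸ h1
      rw [MeasureTheory.Measure.volume_eq_prod ℝ ℝ, MeasureTheory.integral_prod _ hIntS]
      -- now reduce inner z integral for each y
      have hz_eq : ∀ y : ℝ,
          (∫ z, (S2 x).indicator (fun yz => W x yz.1 yz.2) (y, z))
          = (Set.Icc (0:ℝ) (1-x)).indicator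
              (fun y' => ∫ z in Set.Icc (0:ℝ) (1-x-y'), W x y' z) y := by
        intro y
        by_cases hy : 0 ≤ y
        · have hfz : (fun z => (S2 x).indicator (fun yz => W x yz.1 yz.2) (y, z))
              = (Set.Icc (0:ℝ) (1-x-y)).indicator (fun z => W x y z) := by
            funext z
            by_cases hzm : z ∈ Set.Icc (0:ℝ) (1-x-y)
            · rw [Set.indicator_of_mem hzm]
              have : (y, z) ∈ S2 x := ⟨hy, hzm.1, by have := hzm.2; simp at this ⊢; linarith⟩
              rw [Set.indicator_of_mem this]
            · rw [Set.indicator_of_notMem hzm, Set.indicator_of_notMem]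
              intro hcon
              exact hzm ⟨hcon.2.1, by have := hcon.2.2; simp; linarith⟩
          rw [hfz, MeasureTheory.integral_indicator measurableSet_Icc]
          by_cases hy2 : y ≤ 1 - x
          · rw [Set.indicator_of_mem (Set.mem_Icc.mpr ⟨hy, hy2⟩)]
          · rw [Set.indicator_of_notMem (by simp [Set.mem_Icc]; intro _; linarith)]
            rw [Set.Icc_eq_empty (by simp; linarith), MeasureTheory.setIntegral_empty]
        · have hfz : (fun z => (S2 x).indicator (fun yz => W x yz.1 yz.2) (y, z)) = fun _ => 0 := by
            funext z
            rw [Set.indicator_of_notMem]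
            intro hcon
            exact hy hcon.1
          rw [hfz, Set.indicator_of_notMem (by simp [Set.mem_Icc]; intro h; exact absurd h hy)]
          simp
      have congr1 : (∫ y, ∫ z, (S2 x).indicator (fun yz => W x yz.1 yz.2) (y, z))
          = ∫ y, (Set.Icc (0:ℝ) (1-x)).indicator
              (fun y' => ∫ z in Set.Icc (0:ℝ) (1-x-y'), W x y' z) y := by
        congr 1
        funext y
        exact hz_eq y
      rw [congr1, MeasureTheory.integral_indicator measurableSet_Icc]
    · rw [Set.indicator_of_notMem (by simpa using hx)]
      have : (fun yz : ℝ × ℝ => T3.indicator g (x, yz)) = fun _ => 0 := by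
        funext yz
        rw [Set.indicator_of_notMem]
        intro hcon
        exact hx hcon.1
      rw [this]
      simp
  have congr2 : (∫ x, ∫ yz : ℝ × ℝ, T3.indicator g (x, yz))
      = ∫ x, (Set.Ici (0:ℝ)).indicator
          (fun x' => ∫ y in Set.Icc (0:ℝ) (1-x'), ∫ z in Set.Icc (0:ℝ) (1-x'-y), W x' y z) x := by
    congr 1
    funext x
    exact inner_eq x
  rw [congr2]
  -- step 4: shrink Ici 0 to Icc 0 1
  have hshrink : (Set.Ici (0:ℝ)).indicator
          (fun x' => ∫ y in Set.Icc (0:ℝ) (1-x'), ∫ z in Set.Icc (0:ℝ) (1-x'-y), W x' y z)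
      = (Set.Icc (0:ℝ) 1).indicator
          (fun x' => ∫ y in Set.Icc (0:ℝ) (1-x'), ∫ z in Set.Icc (0:ℝ) (1-x'-y), W x' y z) := by
    funext x
    by_cases hx1 : x ∈ Set.Icc (0:ℝ) 1
    · rw [Set.indicator_of_mem hx1, Set.indicator_of_mem (Set.mem_Ici.mpr hx1.1)]
    · by_cases hx0 : x ∈ Set.Ici (0:ℝ)
      · rw [Set.indicator_of_mem hx0, Set.indicator_of_notMem hx1]
        have hgt : (1:ℝ) < x := by
          by_contra hcon
          push_neg at hcon
          exact hx1 ⟨Set.mem_Ici.mp hx0, hcon⟩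
        rw [Set.Icc_eq_empty (by simp; linarith), MeasureTheory.setIntegral_empty]
      · rw [Set.indicator_of_notMem hx0, Set.indicator_of_notMem hx1]
  rw [hshrink, MeasureTheory.integral_indicator measurableSet_Icc]


open MeasureTheory

lemma affine_integral (M N : Matrix (Fin 3) (Fin 3) ℝ) (c d : Fin 3 → ℝ)
    (hdet : |M.det| = 1)
    (hinv1 : ∀ p, d + N.mulVec (c + M.mulVec p) = p)
    (hinv2 : ∀ q, c + M.mulVec (d + N.mulVec q) = q)
    (hK : ∀ p, (c + M.mulVec p) ∈ K3 ↔ p ∈ K3)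
    (F : (Fin 3 → ℝ) → ℝ) :
    ∫ p in K3, F (c + M.mulVec p) = ∫ p in K3, F p := by
  have hdet0 : M.det ≠ 0 := by
    intro h; rw [h] at hdet; simp at hdet
  have hcontM : Continuous fun p : Fin 3 → ℝ => M.mulVec p := by
    have := LinearMap.continuous_of_finiteDimensional (Matrix.toLin' M)
    exact this
  have hcontN : Continuous fun q : Fin 3 → ℝ => N.mulVec q := by
    have := LinearMap.continuous_of_finiteDimensional (Matrix.toLin' N)
    exact this
  let T : (Fin 3 → ℝ) ≃ᵐ (Fin 3 → ℝ) :=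
    { toFun := fun p => c + M.mulVec p
      invFun := fun q => d + N.mulVec q
      left_inv := hinv1
      right_inv := hinv2
      measurable_toFun := (continuous_const.add hcontM).measurable
      measurable_invFun := (continuous_const.add hcontN).measurable }
  have hmpLin : MeasurePreserving (fun p : Fin 3 → ℝ => M.mulVec p) volume volume := by
    refine ⟨hcontM.measurable, ?_⟩
    have h := Real.map_linearMap_volume_pi_eq_smul_volume_pi (f := Matrix.toLin' M)
      (by rwa [LinearMap.det_toLin'])
    rw [LinearMap.det_toLin'] at h
    have hfun : ⇑(Matrix.toLin' M) = fun p : Fin 3 → ℝ => M.mulVec p := by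
      funext p; exact Matrix.toLin'_apply M p
    rw [hfun] at h
    rw [h, show |M.det⁻¹| = 1 from by rw [abs_inv, hdet]; norm_num]
    simp
  have hmp : MeasurePreserving (⇑T) volume volume := by
    have hadd := MeasureTheory.measurePreserving_add_left (volume : Measure (Fin 3 → ℝ)) c
    have := hadd.comp hmpLin
    exact this
  have himg : ⇑T '' K3 = K3 := by
    ext q
    constructor
    · rintro ⟨p, hp, rfl⟩
      exact (hK p).mpr hp
    · intro hq
      refine ⟨d + N.mulVec q, ?_, hinv2 q⟩
      have := (hK (d + N.mulVec q))
      rw [hinv2 q] at this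
      exact this.mp hq
  have := hmp.setIntegral_image_emb T.measurableEmbedding F K3
  rw [himg] at this
  have hTa : ∀ p, T p = c + M.mulVec p := fun p => rfl
  simp only [hTa] at this
  rw [← this]


open MeasureTheory Finset

def Gfun (m n : ℕ) (x y z : ℝ) : ℝ :=
  Cmn m n * x * y * z * jacobiHom m (2*n+3) 2 (2*y - (1-x)) (1-x) *
    jacobiHom n 0 2 (2*z - (1-x-y)) (1-x-y)

lemma final_const (m n : ℕ) :
    Cmn m n * Cmn m n / (2*(n:ℝ)+3) * cst m n *
      (((2:ℕ).factorial : ℝ) * ((2*m+2*n+6).factorial : ℝ) / ((2*m+2*n+9).factorial : ℝ)) = 1 := by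
  have hCC : Cmn m n * Cmn m n =
      (((2*n+3)*(m+n+3)*(m+2*n+4)*(m+2*n+5)*(2*m+2*n+7)*(2*m+2*n+8)*(2*m+2*n+9) : ℕ) : ℝ) /
      (((m+1)*(m+2) : ℕ) : ℝ) := by
    rw [Cmn, div_mul_div_comm, Real.mul_self_sqrt (by positivity), Real.mul_self_sqrt (by positivity)]
  rw [hCC, cst]
  have f1 : ((m+2*n+5).factorial : ℝ)
      = ((m+2*n+5 : ℕ) : ℝ) * ((m+2*n+4 : ℕ) : ℝ) * ((m+2*n+3).factorial : ℝ) := by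
    rw [show m+2*n+5 = (m+2*n+4)+1 from by omega, Nat.factorial_succ,
        show m+2*n+4 = (m+2*n+3)+1 from by omega, Nat.factorial_succ]
    push_cast
    ring
  have f2 : ((m+2).factorial : ℝ) = ((m+2 : ℕ) : ℝ) * ((m+1 : ℕ) : ℝ) * (m.factorial : ℝ) := by
    rw [show m+2 = (m+1)+1 from by omega, Nat.factorial_succ, Nat.factorial_succ]
    push_cast
    ring
  have f3 : ((2*m+2*n+9).factorial : ℝ)
      = ((2*m+2*n+9 : ℕ) : ℝ) * ((2*m+2*n+8 : ℕ) : ℝ) * ((2*m+2*n+7 : ℕ) : ℝ) *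
        ((2*m+2*n+6).factorial : ℝ) := by
    rw [show 2*m+2*n+9 = (2*m+2*n+8)+1 from by omega, Nat.factorial_succ,
        show 2*m+2*n+8 = (2*m+2*n+7)+1 from by omega, Nat.factorial_succ,
        show 2*m+2*n+7 = (2*m+2*n+6)+1 from by omega, Nat.factorial_succ]
    push_cast
    ring
  rw [f1, f2, f3]
  have n1 : ((m+2*n+3).factorial : ℝ) ≠ 0 := Nat.cast_ne_zero.mpr (Nat.factorial_ne_zero _)
  have n2 : (m.factorial : ℝ) ≠ 0 := Nat.cast_ne_zero.mpr (Nat.factorial_ne_zero _)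
  have n3 : ((2*m+2*n+6).factorial : ℝ) ≠ 0 := Nat.cast_ne_zero.mpr (Nat.factorial_ne_zero _)
  have p1 : ((m+2*n+5 : ℕ) : ℝ) ≠ 0 := by positivity
  have p2 : ((m+2*n+4 : ℕ) : ℝ) ≠ 0 := by positivity
  have p3 : ((m+2 : ℕ) : ℝ) ≠ 0 := by positivity
  have p4 : ((m+1 : ℕ) : ℝ) ≠ 0 := by positivity
  have p5 : ((2*m+2*n+9 : ℕ) : ℝ) ≠ 0 := by positivity
  have p6 : ((2*m+2*n+8 : ℕ) : ℝ) ≠ 0 := by positivity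
  have p7 : ((2*m+2*n+7 : ℕ) : ℝ) ≠ 0 := by positivity
  have p8 : ((2*m+2*n+6 : ℕ) : ℝ) ≠ 0 := by positivity
  have p9 : (2*(n:ℝ)+3) ≠ 0 := by positivity
  push_cast
  field_simp
  ring

lemma main_scalar (m1 n1 m2 n2 : ℕ) :
    ∫ p in K3, Gfun m1 n1 (p 0) (p 1) (p 2) * Gfun m2 n2 (p 0) (p 1) (p 2)
    = (if m1 = m2 then (1:ℝ) else 0) * (if n1 = n2 then (1:ℝ) else 0) := by
  have hW : Continuous fun q : ℝ×ℝ×ℝ => Gfun m1 n1 q.1 q.2.1 q.2.2 * Gfun m2 n2 q.1 q.2.1 q.2.2 := by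
    have hj1 : Continuous fun q : ℝ×ℝ×ℝ => jacobiHom m1 (2*n1+3) 2 (2*q.2.1 - (1-q.1)) (1-q.1) :=
      continuous_jacobiHom_comp _ _ _ (by fun_prop) (by fun_prop)
    have hj2 : Continuous fun q : ℝ×ℝ×ℝ => jacobiHom n1 0 2 (2*q.2.2 - (1-q.1-q.2.1)) (1-q.1-q.2.1) :=
      continuous_jacobiHom_comp _ _ _ (by fun_prop) (by fun_prop)
    have hj3 : Continuous fun q : ℝ×ℝ×ℝ => jacobiHom m2 (2*n2+3) 2 (2*q.2.1 - (1-q.1)) (1-q.1) :=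
      continuous_jacobiHom_comp _ _ _ (by fun_prop) (by fun_prop)
    have hj4 : Continuous fun q : ℝ×ℝ×ℝ => jacobiHom n2 0 2 (2*q.2.2 - (1-q.1-q.2.1)) (1-q.1-q.2.1) :=
      continuous_jacobiHom_comp _ _ _ (by fun_prop) (by fun_prop)
    unfold Gfun
    fun_prop
  have htet := tet (fun x y z => Gfun m1 n1 x y z * Gfun m2 n2 x y z) hW
  rw [htet]
  -- innermost integral
  have hinner : ∀ x ∈ Set.Icc (0:ℝ) 1, ∀ y ∈ Set.Icc (0:ℝ) (1-x),
      (∫ z in Set.Icc (0:ℝ) (1-x-y), Gfun m1 n1 x y z * Gfun m2 n2 x y z)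
      = (Cmn m1 n1 * Cmn m2 n2 * x^2 * y^2 *
          jacobiHom m1 (2*n1+3) 2 (2*y-(1-x)) (1-x) *
          jacobiHom m2 (2*n2+3) 2 (2*y-(1-x)) (1-x)) *
        (if n1 = n2 then (1-x-y)^(n1+n2+3) / (2*(n1:ℝ)+3) else 0) := by
    intro x hx y hy
    have hs : 0 ≤ 1-x-y := by have := hy.2; linarith
    rw [MeasureTheory.integral_Icc_eq_integral_Ioc, ← intervalIntegral.integral_of_le hs]
    have hfe : ∀ z : ℝ, Gfun m1 n1 x y z * Gfun m2 n2 x y z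
        = (Cmn m1 n1 * Cmn m2 n2 * x^2 * y^2 *
            jacobiHom m1 (2*n1+3) 2 (2*y-(1-x)) (1-x) *
            jacobiHom m2 (2*n2+3) 2 (2*y-(1-x)) (1-x)) *
          (z^2 * jacobiHom n1 0 2 (2*z - (1-x-y)) (1-x-y) *
            jacobiHom n2 0 2 (2*z - (1-x-y)) (1-x-y)) := by
      intro z
      unfold Gfun
      ring
    rw [intervalIntegral.integral_congr (fun z _ => hfe z),
      intervalIntegral.integral_const_mul, Iz n1 n2 (1-x-y) hs]
  by_cases hn : n1 = n2
  · subst hn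
    simp only [eq_self_iff_true, if_true, mul_one] at hinner ⊢
    -- middle integral
    have hmid : ∀ x ∈ Set.Icc (0:ℝ) 1,
        (∫ y in Set.Icc (0:ℝ) (1-x),
          (Cmn m1 n1 * Cmn m2 n1 * x^2 * y^2 *
            jacobiHom m1 (2*n1+3) 2 (2*y-(1-x)) (1-x) *
            jacobiHom m2 (2*n1+3) 2 (2*y-(1-x)) (1-x)) *
          ((1-x-y)^(n1+n1+3) / (2*(n1:ℝ)+3)))
        = (Cmn m1 n1 * Cmn m2 n1 * x^2 / (2*(n1:ℝ)+3)) *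
            (if m1 = m2 then (1-x)^(m1+m2+2*n1+6) * cst m1 n1 else 0) := by
      intro x hx
      have hr : 0 ≤ 1-x := by have := hx.2; linarith
      rw [MeasureTheory.integral_Icc_eq_integral_Ioc, ← intervalIntegral.integral_of_le hr]
      have hfe : ∀ y : ℝ,
          (Cmn m1 n1 * Cmn m2 n1 * x^2 * y^2 *
            jacobiHom m1 (2*n1+3) 2 (2*y-(1-x)) (1-x) *
            jacobiHom m2 (2*n1+3) 2 (2*y-(1-x)) (1-x)) *
          ((1-x-y)^(n1+n1+3) / (2*(n1:ℝ)+3))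
          = (Cmn m1 n1 * Cmn m2 n1 * x^2 / (2*(n1:ℝ)+3)) *
            (y^2 * (1-x-y)^(2*n1+3) * jacobiHom m1 (2*n1+3) 2 (2*y-(1-x)) (1-x) *
              jacobiHom m2 (2*n1+3) 2 (2*y-(1-x)) (1-x)) := by
        intro y
        rw [show (1-x-y)^(n1+n1+3) = (1-x-y)^(2*n1+3) from by congr 1; omega]
        ring
      rw [intervalIntegral.integral_congr (fun y _ => hfe y),
        intervalIntegral.integral_const_mul, Iy m1 m2 n1 (1-x) hr]
    have hcongr1 : (∫ x in Set.Icc (0:ℝ) 1, ∫ y in Set.Icc (0:ℝ) (1-x),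
          ∫ z in Set.Icc (0:ℝ) (1-x-y), Gfun m1 n1 x y z * Gfun m2 n1 x y z)
        = ∫ x in Set.Icc (0:ℝ) 1, (Cmn m1 n1 * Cmn m2 n1 * x^2 / (2*(n1:ℝ)+3)) *
            (if m1 = m2 then (1-x)^(m1+m2+2*n1+6) * cst m1 n1 else 0) := by
      apply MeasureTheory.setIntegral_congr_fun measurableSet_Icc
      intro x hx
      simp only []
      have h1 : (∫ y in Set.Icc (0:ℝ) (1-x),
          ∫ z in Set.Icc (0:ℝ) (1-x-y), Gfun m1 n1 x y z * Gfun m2 n1 x y z)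
          = ∫ y in Set.Icc (0:ℝ) (1-x),
            (Cmn m1 n1 * Cmn m2 n1 * x^2 * y^2 *
              jacobiHom m1 (2*n1+3) 2 (2*y-(1-x)) (1-x) *
              jacobiHom m2 (2*n1+3) 2 (2*y-(1-x)) (1-x)) *
            ((1-x-y)^(n1+n1+3) / (2*(n1:ℝ)+3)) := by
        apply MeasureTheory.setIntegral_congr_fun measurableSet_Icc
        intro y hy
        exact hinner x hx y hy
      rw [h1, hmid x hx]
    rw [hcongr1]
    by_cases hm : m1 = m2
    · subst hm
      simp only [eq_self_iff_true, if_true, mul_one]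
      have hfe : ∀ x ∈ Set.Icc (0:ℝ) 1,
          (Cmn m1 n1 * Cmn m1 n1 * x^2 / (2*(n1:ℝ)+3)) * ((1-x)^(m1+m1+2*n1+6) * cst m1 n1)
          = (Cmn m1 n1 * Cmn m1 n1 / (2*(n1:ℝ)+3) * cst m1 n1) *
              (x^2 * (1-x)^(2*m1+2*n1+6)) := by
        intro x _
        rw [show (1-x)^(m1+m1+2*n1+6) = (1-x)^(2*m1+2*n1+6) from by congr 1; omega]
        ring
      have hstep : (∫ x in Set.Icc (0:ℝ) 1,
          (Cmn m1 n1 * Cmn m1 n1 * x^2 / (2*(n1:ℝ)+3)) * ((1-x)^(m1+m1+2*n1+6) * cst m1 n1))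
          = ∫ x in Set.Icc (0:ℝ) 1,
            (Cmn m1 n1 * Cmn m1 n1 / (2*(n1:ℝ)+3) * cst m1 n1) * (x^2 * (1-x)^(2*m1+2*n1+6)) :=
        MeasureTheory.setIntegral_congr_fun measurableSet_Icc hfe
      rw [hstep]
      rw [MeasureTheory.integral_Icc_eq_integral_Ioc,
        ← intervalIntegral.integral_of_le (by norm_num : (0:ℝ) ≤ 1),
        intervalIntegral.integral_const_mul, Ibeta (2*m1+2*n1+6) 2]
      rw [show 2+(2*m1+2*n1+6)+1 = 2*m1+2*n1+9 from by omega]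
      exact final_const m1 n1
    · simp [hm]
  · have hz1 : ∀ x ∈ Set.Icc (0:ℝ) 1,
        (∫ y in Set.Icc (0:ℝ) (1-x),
          ∫ z in Set.Icc (0:ℝ) (1-x-y), Gfun m1 n1 x y z * Gfun m2 n2 x y z) = 0 := by
      intro x hx
      have h2 : (∫ y in Set.Icc (0:ℝ) (1-x),
          ∫ z in Set.Icc (0:ℝ) (1-x-y), Gfun m1 n1 x y z * Gfun m2 n2 x y z)
          = ∫ y in Set.Icc (0:ℝ) (1-x), (0:ℝ) :=
        MeasureTheory.setIntegral_congr_fun measurableSet_Icc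
          (fun y hy => by rw [hinner x hx y hy, if_neg hn, mul_zero])
      rw [h2]
      simp
    have hz : (∫ x in Set.Icc (0:ℝ) 1, ∫ y in Set.Icc (0:ℝ) (1-x),
          ∫ z in Set.Icc (0:ℝ) (1-x-y), Gfun m1 n1 x y z * Gfun m2 n2 x y z) = 0 := by
      have h3 : (∫ x in Set.Icc (0:ℝ) 1, ∫ y in Set.Icc (0:ℝ) (1-x),
          ∫ z in Set.Icc (0:ℝ) (1-x-y), Gfun m1 n1 x y z * Gfun m2 n2 x y z)
          = ∫ x in Set.Icc (0:ℝ) 1, (0:ℝ) :=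
        MeasureTheory.setIntegral_congr_fun measurableSet_Icc (fun x hx => hz1 x hx)
      rw [h3]
      simp
    rw [hz, if_neg hn, mul_zero]


lemma dot3_pair (a b : ℝ) (w : Fin 3 → ℝ)
    (hw : w 0 * w 0 + w 1 * w 1 + w 2 * w 2 ≠ 0) :
    dot3 (a • unitV w) (b • unitV w) = a * b := by
  have hnn : (0:ℝ) ≤ w 0^2 + w 1^2 + w 2^2 := by positivity
  have h2 : norm3 w * norm3 w = w 0 * w 0 + w 1 * w 1 + w 2 * w 2 := by
    rw [norm3, Fin.sum_univ_three, Real.mul_self_sqrt (by positivity)]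
    ring
  have h0 : norm3 w ≠ 0 := by
    intro h
    rw [h, mul_zero] at h2
    exact hw h2.symm
  have h1 : dot3 (a • unitV w) (b • unitV w)
      = a * b * ((norm3 w)⁻¹ * (norm3 w)⁻¹) * (w 0 * w 0 + w 1 * w 1 + w 2 * w 2) := by
    simp [dot3, unitV, Fin.sum_univ_three]
    ring
  rw [h1, ← h2]
  field_simp

def scalF (j2 j3 j4 : Fin 4) (m n : ℕ) (p : Fin 3 → ℝ) : ℝ :=
  Cmn m n * lam j2 p * lam j3 p * lam j4 p *
    jacobiHom m (2*n+3) 2 (2 * lam j3 p - (1 - lam j2 p)) (1 - lam j2 p) *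
    jacobiHom n 0 2 (2 * lam j4 p - (1 - lam j2 p - lam j3 p)) (1 - lam j2 p - lam j3 p)

lemma case_lemma (j2 j3 j4 : Fin 4) (M N : Matrix (Fin 3) (Fin 3) ℝ) (c d : Fin 3 → ℝ)
    (hdet : |M.det| = 1)
    (hinv1 : ∀ p, d + N.mulVec (c + M.mulVec p) = p)
    (hinv2 : ∀ q, c + M.mulVec (d + N.mulVec q) = q)
    (hK : ∀ p, (c + M.mulVec p) ∈ K3 ↔ p ∈ K3)
    (hT : ∀ p : Fin 3 → ℝ, (c + M.mulVec p) 0 = lam j2 p ∧ (c + M.mulVec p) 1 = lam j3 p ∧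
      (c + M.mulVec p) 2 = lam j4 p)
    (hw1 : (vtx j3 - vtx j2) 0 * (vtx j3 - vtx j2) 0 + (vtx j3 - vtx j2) 1 * (vtx j3 - vtx j2) 1
      + (vtx j3 - vtx j2) 2 * (vtx j3 - vtx j2) 2 ≠ 0)
    (hw2 : (vtx j4 - vtx j2) 0 * (vtx j4 - vtx j2) 0 + (vtx j4 - vtx j2) 1 * (vtx j4 - vtx j2) 1
      + (vtx j4 - vtx j2) 2 * (vtx j4 - vtx j2) 2 ≠ 0)
    (i : Fin 2) (m1 n1 m2 n2 : ℕ) :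
    ∫ p in K3, dot3 (faceInt j2 j3 j4 i m1 n1 p) (faceInt j2 j3 j4 i m2 n2 p)
    = (if m1 = m2 then (1:ℝ) else 0) * (if n1 = n2 then (1:ℝ) else 0) := by
  have hdot : ∀ p : Fin 3 → ℝ,
      dot3 (faceInt j2 j3 j4 i m1 n1 p) (faceInt j2 j3 j4 i m2 n2 p)
      = scalF j2 j3 j4 m1 n1 p * scalF j2 j3 j4 m2 n2 p := by
    intro p
    show dot3 (scalF j2 j3 j4 m1 n1 p •
        (if i = 0 then unitV (vtx j3 - vtx j2) else unitV (vtx j4 - vtx j2)))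
      (scalF j2 j3 j4 m2 n2 p •
        (if i = 0 then unitV (vtx j3 - vtx j2) else unitV (vtx j4 - vtx j2))) = _
    by_cases hi : i = 0
    · rw [if_pos hi]
      exact dot3_pair _ _ _ hw1
    · rw [if_neg hi]
      exact dot3_pair _ _ _ hw2
  have hcomp : ∀ (m n : ℕ) (p : Fin 3 → ℝ), scalF j2 j3 j4 m n p
      = Gfun m n ((c + M.mulVec p) 0) ((c + M.mulVec p) 1) ((c + M.mulVec p) 2) := by
    intro m n p
    have h := hT p
    rw [h.1, h.2.1, h.2.2]
    rfl
  have hfun : (fun p => dot3 (faceInt j2 j3 j4 i m1 n1 p) (faceInt j2 j3 j4 i m2 n2 p))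
      = fun p => (fun q : Fin 3 → ℝ => Gfun m1 n1 (q 0) (q 1) (q 2) * Gfun m2 n2 (q 0) (q 1) (q 2))
          (c + M.mulVec p) := by
    funext p
    simp only []
    rw [hdot p, hcomp m1 n1 p, hcomp m2 n2 p]
  rw [hfun, affine_integral M N c d hdet hinv1 hinv2 hK
    (fun q : Fin 3 → ℝ => Gfun m1 n1 (q 0) (q 1) (q 2) * Gfun m2 n2 (q 0) (q 1) (q 2))]
  exact main_scalar m1 n1 m2 n2


lemma case123 (i : Fin 2) (m1 n1 m2 n2 : ℕ) :
    ∫ p in K3, dot3 (faceInt 1 2 3 i m1 n1 p) (faceInt 1 2 3 i m2 n2 p)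
    = (if m1 = m2 then (1:ℝ) else 0) * (if n1 = n2 then (1:ℝ) else 0) := by
  apply case_lemma 1 2 3 ![![(1:ℝ),0,0],![0,1,0],![0,0,1]] ![![(1:ℝ),0,0],![0,1,0],![0,0,1]] ![(0:ℝ),0,0] ![(0:ℝ),0,0]
  · erw [Matrix.det_fin_three]; simp [Matrix.vecHead, Matrix.vecTail]
  · intro p; funext k; fin_cases k <;>
      (simp [Matrix.mulVec, dotProduct, Matrix.vecHead, Matrix.vecTail,
        Fin.sum_univ_three]; try ring)
  · intro q; funext k; fin_cases k <;>
      (simp [Matrix.mulVec, dotProduct, Matrix.vecHead, Matrix.vecTail,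
        Fin.sum_univ_three]; try ring)
  · intro p
    simp only [K3, Set.mem_setOf_eq, Pi.add_apply]
    simp [Matrix.mulVec, dotProduct, Matrix.vecHead, Matrix.vecTail, Fin.sum_univ_three]
    try (constructor <;> (rintro ⟨h1, h2, h3, h4⟩; refine ⟨by linarith, by linarith, by linarith, by linarith⟩))
  · intro p
    refine ⟨?_, ?_, ?_⟩ <;>
      (simp [lam, Matrix.mulVec, dotProduct, Matrix.vecHead, Matrix.vecTail,
        Fin.sum_univ_three]; try ring)
  · simp [vtx]
  · simp [vtx]

lemma case023 (i : Fin 2) (m1 n1 m2 n2 : ℕ) :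
    ∫ p in K3, dot3 (faceInt 0 2 3 i m1 n1 p) (faceInt 0 2 3 i m2 n2 p)
    = (if m1 = m2 then (1:ℝ) else 0) * (if n1 = n2 then (1:ℝ) else 0) := by
  apply case_lemma 0 2 3 ![![(-1:ℝ),-1,-1],![0,1,0],![0,0,1]] ![![(-1:ℝ),-1,-1],![0,1,0],![0,0,1]] ![(1:ℝ),0,0] ![(1:ℝ),0,0]
  · erw [Matrix.det_fin_three]; simp [Matrix.vecHead, Matrix.vecTail]
  · intro p; funext k; fin_cases k <;>
      (simp [Matrix.mulVec, dotProduct, Matrix.vecHead, Matrix.vecTail,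
        Fin.sum_univ_three]; try ring)
  · intro q; funext k; fin_cases k <;>
      (simp [Matrix.mulVec, dotProduct, Matrix.vecHead, Matrix.vecTail,
        Fin.sum_univ_three]; try ring)
  · intro p
    simp only [K3, Set.mem_setOf_eq, Pi.add_apply]
    simp [Matrix.mulVec, dotProduct, Matrix.vecHead, Matrix.vecTail, Fin.sum_univ_three]
    try (constructor <;> (rintro ⟨h1, h2, h3, h4⟩; refine ⟨by linarith, by linarith, by linarith, by linarith⟩))
  · intro p
    refine ⟨?_, ?_, ?_⟩ <;>
      (simp [lam, Matrix.mulVec, dotProduct, Matrix.vecHead, Matrix.vecTail,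
        Fin.sum_univ_three]; try ring)
  · simp [vtx]
  · simp [vtx]

lemma case013 (i : Fin 2) (m1 n1 m2 n2 : ℕ) :
    ∫ p in K3, dot3 (faceInt 0 1 3 i m1 n1 p) (faceInt 0 1 3 i m2 n2 p)
    = (if m1 = m2 then (1:ℝ) else 0) * (if n1 = n2 then (1:ℝ) else 0) := by
  apply case_lemma 0 1 3 ![![(-1:ℝ),-1,-1],![1,0,0],![0,0,1]] ![![(0:ℝ),1,0],![-1,-1,-1],![0,0,1]] ![(1:ℝ),0,0] ![(0:ℝ),1,0]
  · erw [Matrix.det_fin_three]; simp [Matrix.vecHead, Matrix.vecTail]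
  · intro p; funext k; fin_cases k <;>
      (simp [Matrix.mulVec, dotProduct, Matrix.vecHead, Matrix.vecTail,
        Fin.sum_univ_three]; try ring)
  · intro q; funext k; fin_cases k <;>
      (simp [Matrix.mulVec, dotProduct, Matrix.vecHead, Matrix.vecTail,
        Fin.sum_univ_three]; try ring)
  · intro p
    simp only [K3, Set.mem_setOf_eq, Pi.add_apply]
    simp [Matrix.mulVec, dotProduct, Matrix.vecHead, Matrix.vecTail, Fin.sum_univ_three]
    try (constructor <;> (rintro ⟨h1, h2, h3, h4⟩; refine ⟨by linarith, by linarith, by linarith, by linarith⟩))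
  · intro p
    refine ⟨?_, ?_, ?_⟩ <;>
      (simp [lam, Matrix.mulVec, dotProduct, Matrix.vecHead, Matrix.vecTail,
        Fin.sum_univ_three]; try ring)
  · simp [vtx]
  · simp [vtx]

lemma case012 (i : Fin 2) (m1 n1 m2 n2 : ℕ) :
    ∫ p in K3, dot3 (faceInt 0 1 2 i m1 n1 p) (faceInt 0 1 2 i m2 n2 p)
    = (if m1 = m2 then (1:ℝ) else 0) * (if n1 = n2 then (1:ℝ) else 0) := by
  apply case_lemma 0 1 2 ![![(-1:ℝ),-1,-1],![1,0,0],![0,1,0]] ![![(0:ℝ),1,0],![0,0,1],![-1,-1,-1]] ![(1:ℝ),0,0] ![(0:ℝ),0,1]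
  · erw [Matrix.det_fin_three]; simp [Matrix.vecHead, Matrix.vecTail]
  · intro p; funext k; fin_cases k <;>
      (simp [Matrix.mulVec, dotProduct, Matrix.vecHead, Matrix.vecTail,
        Fin.sum_univ_three]; try ring)
  · intro q; funext k; fin_cases k <;>
      (simp [Matrix.mulVec, dotProduct, Matrix.vecHead, Matrix.vecTail,
        Fin.sum_univ_three]; try ring)
  · intro p
    simp only [K3, Set.mem_setOf_eq, Pi.add_apply]
    simp [Matrix.mulVec, dotProduct, Matrix.vecHead, Matrix.vecTail, Fin.sum_univ_three]
    try (constructor <;> (rintro ⟨h1, h2, h3, h4⟩; refine ⟨by linarith, by linarith, by linarith, by linarith⟩))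
  · intro p
    refine ⟨?_, ?_, ?_⟩ <;>
      (simp [lam, Matrix.mulVec, dotProduct, Matrix.vecHead, Matrix.vecTail,
        Fin.sum_univ_three]; try ring)
  · simp [vtx]
  · simp [vtx]

/-- for each face `f_{j1} = [j2,j3,j4]` of the reference
tetrahedron and each fixed `i ∈ {1,2}`, the face-based interior functions are
orthonormal on `K³`. -/
theorem stmt16 : ∀ (j1 j2 j3 j4 : Fin 4), j2 ≠ j1 → j3 ≠ j1 → j4 ≠ j1 →
    j2 < j3 → j3 < j4 → ∀ i : Fin 2, ∀ m1 n1 m2 n2 : ℕ,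
    ∫ p in K3, dot3 (faceInt j2 j3 j4 i m1 n1 p) (faceInt j2 j3 j4 i m2 n2 p) =
      (if m1 = m2 then (1:ℝ) else 0) * (if n1 = n2 then (1:ℝ) else 0) := by
  intro j1 j2 j3 j4 h21 h31 h41 h23 h34 i m1 n1 m2 n2
  fin_cases j2 <;> fin_cases j3 <;> fin_cases j4 <;>
    first
      | exact absurd h23 (by decide)
      | exact absurd h34 (by decide)
      | exact case123 i m1 n1 m2 n2
      | exact case023 i m1 n1 m2 n2
      | exact case013 i m1 n1 m2 n2
      | exact case012 i m1 n1 m2 n2
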